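/- Let N ≥ 2 be an integer, b ∈ ℝ², and let f : ℝ² → ℝ be continuously differentiable. Let h(ξ) = |ξ + b|². Then the polygon–polygon operator commutes with the rotation generator {h, ·}: for every ξ ∈ ℝ², Σ_{l=1}^{N−1} {h, f}(Q_l ξ + (Q_l − I) b) = {h, Q̃_b f}(ξ), i.e. Q̃_b({|T_b ·|², f}) = {|T_b ·|², Q̃_b f} pointwise. -/

import Mathlib

open Real Finset

/-- The Poisson bracket `{g, f} = ∂₁g ∂₂f - ∂₂g ∂₁f` on the plane identified with `ℂ`,
where `∂₁` (resp. `∂₂`) is the derivative in the direction `1` (resp. `I`). -/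
noncomputable def pb (g f : ℂ → ℝ) (x : ℂ) : ℝ :=
  fderiv ℝ g x 1 * fderiv ℝ f x Complex.I - fderiv ℝ g x Complex.I * fderiv ℝ f x 1

/-- The polygon–polygon operator `(Q̃_b f)(ξ) = ∑_{l=1}^{N-1} f(Q_l ξ + (Q_l - I) b)`,
where the rotation `Q_l` by angle `2πl/N` is multiplication by `exp(2πi/N)^l`. -/
noncomputable def Qop (N : ℕ) (b : ℂ) (f : ℂ → ℝ) (ξ : ℂ) : ℝ :=
  ∑ l ∈ Finset.Ico 1 N,
    f ((Complex.exp (2 * π * Complex.I / N)) ^ l * ξ +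
        ((Complex.exp (2 * π * Complex.I / N)) ^ l - 1) * b)

private lemma hasFDerivAt_normSq_shift (b x : ℂ) :
    HasFDerivAt (fun η : ℂ => ‖η + b‖ ^ 2)
      ((2 * (x + b).re) • (Complex.reCLM : ℂ →L[ℝ] ℝ) +
        (2 * (x + b).im) • (Complex.imCLM : ℂ →L[ℝ] ℝ)) x := by
  have e : (fun η : ℂ => ‖η + b‖ ^ 2) =
      fun η : ℂ => (Complex.reCLM η + b.re) ^ 2 + (Complex.imCLM η + b.im) ^ 2 := by
    funext η
    rw [Complex.sq_norm, Complex.normSq_apply]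
    simp [Complex.add_re, Complex.add_im]
    ring
  rw [e]
  have h1 : HasFDerivAt (fun η : ℂ => (Complex.reCLM η + b.re) ^ 2)
      ((2 * (x.re + b.re)) • (Complex.reCLM : ℂ →L[ℝ] ℝ)) x := by
    have h0 := (Complex.reCLM.hasFDerivAt (x := x)).add_const b.re
    have := h0.mul h0
    have := this.congr_fderiv (g' := (2 * (x.re + b.re)) • (Complex.reCLM : ℂ →L[ℝ] ℝ)) (by ext v; simp; ring)
    exact this.congr_of_eventuallyEq (Filter.Eventually.of_forall fun η => by simp [pow_two])
  have h2 : HasFDerivAt (fun η : ℂ => (Complex.imCLM η + b.im) ^ 2)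
      ((2 * (x.im + b.im)) • (Complex.imCLM : ℂ →L[ℝ] ℝ)) x := by
    have h0 := (Complex.imCLM.hasFDerivAt (x := x)).add_const b.im
    have := h0.mul h0
    have := this.congr_fderiv (g' := (2 * (x.im + b.im)) • (Complex.imCLM : ℂ →L[ℝ] ℝ)) (by ext v; simp; ring)
    exact this.congr_of_eventuallyEq (Filter.Eventually.of_forall fun η => by simp [pow_two])
  have := h1.add h2
  exact this

private lemma fderiv_h_apply (b x v : ℂ) :
    fderiv ℝ (fun η : ℂ => ‖η + b‖ ^ 2) x v
      = 2 * (x + b).re * v.re + 2 * (x + b).im * v.im := by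
  rw [(hasFDerivAt_normSq_shift b x).fderiv]
  simp

private lemma clm_decomp (L : ℂ →L[ℝ] ℝ) (c : ℂ) :
    L c = c.re * L 1 + c.im * L Complex.I := by
  nth_rewrite 1 [← Complex.re_add_im c]
  rw [show (c.re : ℂ) + c.im * Complex.I = c.re • (1 : ℂ) + c.im • Complex.I by
        simp [Complex.real_smul],
      map_add, map_smul, map_smul, smul_eq_mul, smul_eq_mul]

/-- The polygon–polygon operator commutes with the rotation generator `{|T_b ·|², ·}`:
`Q̃_b({|T_b ·|², f}) = {|T_b ·|², Q̃_b f}` pointwise, for `f` of class `C¹`. -/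
theorem Qop_commutes_with_shifted_rotation_generator
    (N : ℕ) (hN : 2 ≤ N) (b : ℂ) (f : ℂ → ℝ) (hf : ContDiff ℝ 1 f) :
    ∀ ξ : ℂ,
      (∑ l ∈ Finset.Ico 1 N,
        pb (fun η => ‖η + b‖ ^ 2) f
          ((Complex.exp (2 * π * Complex.I / N)) ^ l * ξ +
            ((Complex.exp (2 * π * Complex.I / N)) ^ l - 1) * b)) =
      pb (fun η => ‖η + b‖ ^ 2) (Qop N b f) ξ := by
  intro ξ
  set c : ℂ := Complex.exp (2 * π * Complex.I / N) with hc
  set g : ℕ → ℂ → ℂ := fun l η => c ^ l * η + (c ^ l - 1) * b with hg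
  have hfd : Differentiable ℝ f := hf.differentiable one_ne_zero
  -- derivative of each composed term
  have hterm : ∀ l : ℕ, HasFDerivAt (fun η => f (g l η))
      ((fderiv ℝ f (g l ξ)).comp
        ((c ^ l) • (ContinuousLinearMap.id ℝ ℂ))) ξ := by
    intro l
    have hgl : HasFDerivAt (g l) ((c ^ l) • (ContinuousLinearMap.id ℝ ℂ)) ξ := by
      have h1 : HasFDerivAt (fun η : ℂ => c ^ l * η)
          ((c ^ l) • (ContinuousLinearMap.id ℝ ℂ)) ξ := by
        exact ((hasFDerivAt_id (𝕜 := ℝ) ξ).const_smul (c ^ l)).congr_of_eventuallyEq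
          (Filter.Eventually.of_forall fun η => by simp [smul_eq_mul])
      simpa [hg] using h1.add_const ((c ^ l - 1) * b)
    exact ((hfd (g l ξ)).hasFDerivAt).comp ξ hgl
  have hQ : HasFDerivAt (Qop N b f)
      (∑ l ∈ Finset.Ico 1 N, (fderiv ℝ f (g l ξ)).comp
        ((c ^ l) • (ContinuousLinearMap.id ℝ ℂ))) ξ := by
    have := HasFDerivAt.sum (fun l (_ : l ∈ Finset.Ico 1 N) => hterm l)
    exact this.congr_of_eventuallyEq
      (Filter.Eventually.of_forall fun η => by simp [Qop, hg, hc, Finset.sum_apply])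
  have hQv : ∀ v : ℂ, fderiv ℝ (Qop N b f) ξ v
      = ∑ l ∈ Finset.Ico 1 N, fderiv ℝ f (g l ξ) (c ^ l * v) := by
    intro v
    rw [hQ.fderiv]
    simp [ContinuousLinearMap.sum_apply, smul_eq_mul]
  -- now compute both sides
  unfold pb
  rw [fderiv_h_apply, fderiv_h_apply, hQv, hQv]
  simp only [Complex.one_re, Complex.one_im, Complex.I_re, Complex.I_im,
    mul_one, mul_zero, add_zero, zero_add]
  rw [Finset.mul_sum, Finset.mul_sum, ← Finset.sum_sub_distrib]
  apply Finset.sum_congr rfl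
  intro l _
  have hx : g l ξ + b = c ^ l * (ξ + b) := by rw [hg]; ring
  rw [fderiv_h_apply, fderiv_h_apply, hx]
  simp only [Complex.one_re, Complex.one_im, Complex.I_re, Complex.I_im,
    mul_one, mul_zero, add_zero, zero_add]
  rw [clm_decomp (fderiv ℝ f (g l ξ)) (c ^ l * Complex.I),
      clm_decomp (fderiv ℝ f (g l ξ)) (c ^ l)]
  simp only [Complex.mul_re, Complex.mul_im, Complex.I_re, Complex.I_im]
  ring
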